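/- Fix a radial function φ on (0,1] of the form φ(r) = sin(πn₂ r) sin(πn₃ r) / r², where n₂, n₃ are positive integers. Then for all positive integers a with a ≠ 0, |∫₀¹ cos(aπr) φ(r) dr| ≤ C ‖φ'‖_{L^∞} / a², and consequently, if n, n₁ ≤ some N' and n₂ ∼ N₂', n₃ ∼ N₃' with N' > 4N₁' and n ∼ N', n₁ ≤ N₁', then |∫₀¹ sin(nπr) sin(n₁πr) φ(r) dr| ≤ C (N₂')² N₃' / (N')². -/

import Mathlib

open Real intervalIntegral MeasureTheory Set

lemma abs_cos_sub_one_le (x : ℝ) : |Real.cos x - 1| ≤ x^2/2 := by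
  rw [abs_sub_comm, abs_of_nonneg (by linarith [Real.cos_le_one x])]
  linarith [Real.one_sub_sq_div_two_le_cos (x := x)]

lemma abs_sin_div_le_one (t : ℝ) : |Real.sin t / t| ≤ 1 := by
  rcases eq_or_ne t 0 with h | h
  · simp [h]
  · rw [abs_div]
    exact div_le_one_of_le₀ Real.abs_sin_le_abs (abs_nonneg t)

lemma intervalIntegrable_of_bound (f : ℝ → ℝ) (hm : Measurable f) (C : ℝ)
    (h : ∀ x, |f x| ≤ C) (a b : ℝ) : IntervalIntegrable f volume a b := by
  rw [intervalIntegrable_iff]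
  have hC : IntegrableOn (fun _ : ℝ => C) (uIoc a b) volume :=
    integrableOn_const measure_Ioc_lt_top.ne
  refine Integrable.mono' hC (hm.aestronglyMeasurable.restrict) ?_
  exact ae_of_all _ fun x => h x

lemma meas_cos_aux (c : ℝ) : Measurable fun r : ℝ => (Real.cos (c*r) - 1)/r^2 := by
  fun_prop

lemma integrable_cos_aux (c : ℝ) (a b : ℝ) :
    IntervalIntegrable (fun r : ℝ => (Real.cos (c*r) - 1)/r^2) volume a b := by
  refine intervalIntegrable_of_bound _ (meas_cos_aux c) (c^2/2) (fun x => ?_) a b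
  rcases eq_or_ne x 0 with h | h
  · simp [h]; positivity
  · rw [abs_div, abs_of_nonneg (by positivity : (0:ℝ) ≤ x^2)]
    rw [div_le_iff₀ (by positivity)]
    calc |Real.cos (c*x) - 1| ≤ (c*x)^2/2 := abs_cos_sub_one_le _
    _ = c^2/2 * x^2 := by ring

lemma integrable_sin_div (a b : ℝ) :
    IntervalIntegrable (fun t : ℝ => Real.sin t / t) volume a b :=
  intervalIntegrable_of_bound _ (by fun_prop) 1 abs_sin_div_le_one a b

lemma integrable_sin_div_mul (c : ℝ) (a b : ℝ) :
    IntervalIntegrable (fun r : ℝ => Real.sin (c*r) / r) volume a b := by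
  refine intervalIntegrable_of_bound _ (by fun_prop) |c| (fun x => ?_) a b
  rcases eq_or_ne x 0 with h | h
  · simp [h]
  · rw [abs_div, div_le_iff₀ (by positivity)]
    calc |Real.sin (c*x)| ≤ |c*x| := Real.abs_sin_le_abs
    _ = |c| * |x| := abs_mul _ _


noncomputable def Si (x : ℝ) : ℝ := ∫ t in (0:ℝ)..x, Real.sin t / t
noncomputable def gg (t : ℝ) : ℝ :=
  -Real.cos t / t - Real.sin t / t^2 + 2*Real.cos t / t^3
noncomputable def FF (c : ℝ) : ℝ := ∫ r in (0:ℝ)..1, (Real.cos (c*r) - 1) / r^2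

lemma gg_hasDeriv {t : ℝ} (ht : 0 < t) :
    HasDerivAt gg (Real.sin t / t - 6 * Real.cos t / t^4) t := by
  have h1 : HasDerivAt (fun u : ℝ => -Real.cos u / u)
      ((- -Real.sin t * t - -Real.cos t * 1) / t ^ 2) t :=
    ((Real.hasDerivAt_cos t).neg).div (hasDerivAt_id t) ht.ne'
  have h2 : HasDerivAt (fun u : ℝ => Real.sin u / u^2)
      ((Real.cos t * t^2 - Real.sin t * ((2:ℕ) * t^1)) / (t^2)^2) t :=
    (Real.hasDerivAt_sin t).div (hasDerivAt_pow 2 t) (by positivity)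
  have h3 : HasDerivAt (fun u : ℝ => 2*Real.cos u / u^3)
      ((2 * -Real.sin t * t^3 - 2*Real.cos t * ((3:ℕ) * t^2)) / (t^3)^2) t :=
    ((Real.hasDerivAt_cos t).const_mul 2).div (hasDerivAt_pow 3 t) (by positivity)
  have H := (h1.sub h2).add h3
  have H2 : HasDerivAt gg ((- -Real.sin t * t - -Real.cos t * 1) / t ^ 2 -
      (Real.cos t * t^2 - Real.sin t * ((2:ℕ) * t^1)) / (t^2)^2 +
      (2 * -Real.sin t * t^3 - 2*Real.cos t * ((3:ℕ) * t^2)) / (t^3)^2) t := H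
  convert H2 using 1
  field_simp
  ring

lemma integrable_cos_pow4 {x y : ℝ} (hx : 0 < x) (hxy : x ≤ y) :
    IntervalIntegrable (fun t : ℝ => Real.cos t / t^4) volume x y := by
  apply ContinuousOn.intervalIntegrable
  apply ContinuousOn.div Real.continuous_cos.continuousOn (by fun_prop)
  intro t htm
  rw [uIcc_of_le hxy] at htm
  have : 0 < t := lt_of_lt_of_le hx htm.1
  positivity

lemma si_sub {x y : ℝ} (hx : 0 < x) (hxy : x ≤ y) :
    Si y - Si x = gg y - gg x + 6 * ∫ t in x..y, Real.cos t / t^4 := by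
  have key : ∫ t in x..y, (Real.sin t / t - 6 * (Real.cos t / t^4)) = gg y - gg x := by
    apply intervalIntegral.integral_eq_sub_of_hasDerivAt
    · intro t htm
      rw [uIcc_of_le hxy] at htm
      have h := gg_hasDeriv (lt_of_lt_of_le hx htm.1)
      simpa only [mul_div_assoc] using h
    · exact (integrable_sin_div x y).sub ((integrable_cos_pow4 hx hxy).const_mul 6)
  rw [intervalIntegral.integral_sub (integrable_sin_div x y)
      ((integrable_cos_pow4 hx hxy).const_mul 6), intervalIntegral.integral_const_mul] at key
  have hadd : Si x + ∫ t in x..y, Real.sin t / t = Si y :=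
    intervalIntegral.integral_add_adjacent_intervals (integrable_sin_div 0 x)
      (integrable_sin_div x y)
  have : ∫ t in x..y, Real.sin t / t = Si y - Si x := by linarith
  rw [this] at key
  linarith

lemma cos_bound_tail {x t : ℝ} (hx : 0 < x) (ht : t ∈ Ioi x) :
    ‖Real.cos t / t^4‖ ≤ t^(-4:ℝ) := by
  have ht0 : 0 < t := hx.trans ht
  have h4 : t ^ (-4:ℝ) = (t^(4:ℕ))⁻¹ := by
    rw [show (-4:ℝ) = -((4:ℕ):ℝ) by norm_num, Real.rpow_neg ht0.le, Real.rpow_natCast]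
  rw [h4, Real.norm_eq_abs, abs_div, abs_of_pos (by positivity : (0:ℝ) < t^4),
    div_eq_mul_inv]
  exact mul_le_of_le_one_left (by positivity) (Real.abs_cos_le_one t)

lemma integrableOn_cos_tail {x : ℝ} (hx : 0 < x) :
    IntegrableOn (fun t : ℝ => Real.cos t / t^4) (Ioi x) volume := by
  have hg : IntegrableOn (fun t : ℝ => t^(-4:ℝ)) (Ioi x) volume :=
    integrableOn_Ioi_rpow_of_lt (by norm_num) hx
  refine hg.mono' ((by measurability : Measurable fun t : ℝ => Real.cos t / t^4).aestronglyMeasurable) ?_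
  filter_upwards [ae_restrict_mem measurableSet_Ioi] with t ht
  exact cos_bound_tail hx ht

lemma tail_bound {x : ℝ} (hx : 0 < x) :
    |∫ t in Ioi x, Real.cos t / t^4| ≤ 1/(3*x^3) := by
  have hg : IntegrableOn (fun t : ℝ => t^(-4:ℝ)) (Ioi x) volume :=
    integrableOn_Ioi_rpow_of_lt (by norm_num) hx
  have hb : |∫ t in Ioi x, Real.cos t / t^4| ≤ ∫ t in Ioi x, t^(-4:ℝ) := by
    rw [← Real.norm_eq_abs]
    refine norm_integral_le_of_norm_le hg ?_
    filter_upwards [ae_restrict_mem measurableSet_Ioi] with t ht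
    exact cos_bound_tail hx ht
  have hv : ∫ t in Ioi x, t^(-4:ℝ) = -x ^ ((-4:ℝ) + 1) / ((-4:ℝ) + 1) :=
    integral_Ioi_rpow_of_lt (by norm_num) hx
  have hx3 : x ^ ((-4:ℝ)+1) = (x^(3:ℕ))⁻¹ := by
    rw [show (-4:ℝ)+1 = -((3:ℕ):ℝ) by norm_num, Real.rpow_neg hx.le, Real.rpow_natCast]
  rw [hv, hx3] at hb
  have : -(x ^ 3)⁻¹ / (-4 + 1) = 1/(3*x^3) := by
    field_simp
    ring
  linarith [hb, this.ge]

noncomputable def Lc : ℝ := Si π - gg π + 6 * ∫ t in Ioi π, Real.cos t / t^4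

lemma Si_int {p : ℕ} (hp : 1 ≤ p) :
    Si ((p:ℝ)*π) = Lc + gg ((p:ℝ)*π) - 6 * ∫ t in Ioi ((p:ℝ)*π), Real.cos t / t^4 := by
  set y := (p:ℝ)*π with hy
  have hxy : π ≤ y := by
    rw [hy]
    have h1p : (1:ℝ) ≤ (p:ℝ) := by exact_mod_cast hp
    nlinarith [Real.pi_pos]
  have h1 := si_sub Real.pi_pos hxy
  have hsplit : ∫ t in Ioi π, Real.cos t / t^4 =
      (∫ t in π..y, Real.cos t / t^4) + ∫ t in Ioi y, Real.cos t / t^4 := by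
    rw [intervalIntegral.integral_of_le hxy]
    rw [← setIntegral_union (Set.Ioc_disjoint_Ioi le_rfl) measurableSet_Ioi
      ((integrable_cos_pow4 Real.pi_pos hxy).1) (integrableOn_cos_tail (lt_of_lt_of_le Real.pi_pos hxy))]
    rw [Set.Ioc_union_Ioi_eq_Ioi hxy]
  rw [Lc]
  rw [hsplit] at *
  linarith

lemma u_contOn (c : ℝ) : ContinuousOn (fun r : ℝ => (Real.cos (c*r) - 1)/r) (Icc 0 1) := by
  have hbd : ∀ x : ℝ, ‖(Real.cos (c*x) - 1)/x‖ ≤ c^2/2 * |x| := by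
    intro x
    rcases eq_or_ne x 0 with h | h
    · simp [h]
    · rw [Real.norm_eq_abs, abs_div, div_le_iff₀ (abs_pos.mpr h)]
      calc |Real.cos (c*x) - 1| ≤ (c*x)^2/2 := abs_cos_sub_one_le _
      _ = c^2/2 * (|x| * |x|) := by rw [abs_mul_abs_self x]; ring
      _ = c^2/2 * |x| * |x| := by ring
  intro r hr
  rcases eq_or_ne r 0 with h | h
  · subst h
    have h0 : (Real.cos (c*0) - 1)/(0:ℝ) = 0 := by simp
    unfold ContinuousWithinAt
    simp only [h0]
    apply squeeze_zero_norm hbd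
    have hcont : Continuous fun r : ℝ => c^2/2 * |r| := by continuity
    have := hcont.tendsto 0
    simp only [abs_zero, mul_zero] at this
    exact this.mono_left nhdsWithin_le_nhds
  · apply ContinuousAt.continuousWithinAt
    exact ContinuousAt.div (by fun_prop) continuousAt_id h

lemma u_deriv {c r : ℝ} (hr : r ≠ 0) :
    HasDerivAt (fun r : ℝ => (Real.cos (c*r) - 1)/r)
      (-(c * Real.sin (c*r))/r - (Real.cos (c*r) - 1)/r^2) r := by
  have hN : HasDerivAt (fun y : ℝ => Real.cos (c*y) - 1) (-Real.sin (c*r) * (c*1)) r :=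
    (((hasDerivAt_id r).const_mul c).cos).sub_const 1
  have h2 := hN.div (hasDerivAt_id r) hr
  have h3 : HasDerivAt (fun r : ℝ => (Real.cos (c*r) - 1)/r)
      ((-Real.sin (c*r) * (c*1) * r - (Real.cos (c*r) - 1) * 1) / r^2) r := h2
  convert h3 using 1
  field_simp

lemma FF_eq {c : ℝ} (hc : 0 < c) : FF c = -c * Si c + 1 - Real.cos c := by
  have hint1 : IntervalIntegrable (fun r : ℝ => -(c * Real.sin (c*r))/r) volume 0 1 := by
    have hfun : (fun r : ℝ => -(c * Real.sin (c*r))/r)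
        = fun r : ℝ => (-c) * (Real.sin (c*r)/r) := funext fun r => by ring
    rw [hfun]
    exact (integrable_sin_div_mul c 0 1).const_mul (-c)
  have hint2 := integrable_cos_aux c 0 1
  have hFTC := intervalIntegral.integral_eq_sub_of_hasDeriv_right_of_le zero_le_one
      (u_contOn c)
      (fun r hr => (u_deriv (c := c) (ne_of_gt hr.1)).hasDerivWithinAt)
      (hint1.sub hint2)
  rw [intervalIntegral.integral_sub hint1 hint2] at hFTC
  have hval : (Real.cos (c*1) - 1)/(1:ℝ) - (Real.cos (c*0) - 1)/(0:ℝ) = Real.cos c - 1 := by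
    simp
  rw [hval] at hFTC
  have hsin : ∫ r in (0:ℝ)..1, -(c * Real.sin (c*r))/r = -c * Si c := by
    have hfun : (fun r : ℝ => -(c * Real.sin (c*r))/r)
        = fun r : ℝ => (-c) * (c * ((fun t : ℝ => Real.sin t / t) (c*r))) := by
      funext r
      rcases eq_or_ne r 0 with h | h
      · simp [h]
      · field_simp
    rw [hfun, intervalIntegral.integral_const_mul, intervalIntegral.integral_const_mul,
      intervalIntegral.integral_comp_mul_left (fun t : ℝ => Real.sin t / t) hc.ne']
    rw [mul_zero, mul_one]
    rw [Si]
    field_simp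
    rw [smul_eq_mul, ← mul_assoc, mul_one_div_cancel hc.ne', one_mul]
  rw [hsin] at hFTC
  rw [FF]
  linarith

lemma cos_nat_pi (p : ℕ) : Real.cos ((p:ℝ)*π) = (-1:ℝ)^p := by
  simpa using Real.cos_nat_mul_pi_sub 0 p

lemma E_bound {p : ℕ} (hp : 1 ≤ p) :
    |FF ((p:ℝ)*π) + Lc*π*p - 1| ≤ 1/(2*(p:ℝ)^2) := by
  have hp1 : (1:ℝ) ≤ (p:ℝ) := by exact_mod_cast hp
  have hx : 0 < (p:ℝ)*π := by positivity
  have hp0 : (p:ℝ) ≠ 0 := by positivity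
  have hπ : π ≠ 0 := Real.pi_ne_zero
  have hcos := cos_nat_pi p
  have hsin := Real.sin_nat_mul_pi p
  set T := ∫ t in Ioi ((p:ℝ)*π), Real.cos t / t^4 with hT
  have hTb : |T| ≤ 1/(3*((p:ℝ)*π)^3) := tail_bound hx
  have hgg : gg ((p:ℝ)*π) = -((-1:ℝ)^p) / ((p:ℝ)*π) + 2*(-1:ℝ)^p / ((p:ℝ)*π)^3 := by
    rw [gg, hcos, hsin]
    ring
  have hSi := Si_int hp
  have key : FF ((p:ℝ)*π) + Lc*π*p - 1
      = -2*(-1:ℝ)^p/((p:ℝ)*π)^2 + 6*((p:ℝ)*π)*T := by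
    rw [FF_eq hx, hSi, hgg, hcos]
    field_simp
    ring
  rw [key]
  have h1 : |(-2*(-1:ℝ)^p/((p:ℝ)*π)^2)| = 2/((p:ℝ)*π)^2 := by
    rw [abs_div]
    congr 1
    · simp [abs_mul]
    · exact abs_of_pos (by positivity)
  have h2 : |6*((p:ℝ)*π)*T| ≤ 2/((p:ℝ)*π)^2 := by
    rw [abs_mul, abs_of_pos (by positivity : (0:ℝ) < 6*((p:ℝ)*π))]
    calc 6*((p:ℝ)*π) * |T| ≤ 6*((p:ℝ)*π) * (1/(3*((p:ℝ)*π)^3)) := by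
          apply mul_le_mul_of_nonneg_left hTb (by positivity)
    _ = 2/((p:ℝ)*π)^2 := by field_simp; ring
  calc |(-2*(-1:ℝ)^p/((p:ℝ)*π)^2 + 6*((p:ℝ)*π)*T)|
      ≤ |(-2*(-1:ℝ)^p/((p:ℝ)*π)^2)| + |6*((p:ℝ)*π)*T| := abs_add_le _ _
  _ ≤ 2/((p:ℝ)*π)^2 + 2/((p:ℝ)*π)^2 := by rw [h1]; linarith
  _ = 4/(π^2*(p:ℝ)^2) := by field_simp; ring
  _ ≤ 1/(2*(p:ℝ)^2) := by
      rw [div_le_div_iff₀ (by positivity) (by positivity)]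
      have hpi2 : (9:ℝ) ≤ π^2 := by nlinarith [Real.pi_gt_three]
      nlinarith [mul_le_mul_of_nonneg_right hpi2 (sq_nonneg ((p:ℝ)))]

lemma FF_zero : FF 0 = 0 := by
  rw [FF]
  have : (fun r : ℝ => (Real.cos ((0:ℝ)*r) - 1)/r^2) = fun _ => (0:ℝ) := by
    funext r; simp
  rw [this]
  simp

lemma E_bound_all (q : ℕ) : |FF ((q:ℝ)*π) + Lc*π*q - 1| ≤ 1 := by
  rcases Nat.eq_zero_or_pos q with h | h
  · subst h
    simp [FF_zero]
  · have := E_bound h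
    have hq1 : (1:ℝ) ≤ (q:ℝ) := by exact_mod_cast h
    have : 1/(2*(q:ℝ)^2) ≤ 1 := by
      rw [div_le_one (by positivity)]
      nlinarith
    linarith [E_bound h]

lemma Lc_bound : |Lc| ≤ 4 := by
  have hSi : |Si π| ≤ π := by
    have := intervalIntegral.norm_integral_le_of_norm_le_const
      (C := 1) (f := fun t : ℝ => Real.sin t / t) (a := 0) (b := π)
      (fun x _ => by rw [Real.norm_eq_abs]; exact abs_sin_div_le_one x)
    rw [Si]
    simpa [abs_of_pos Real.pi_pos] using this
  have hgg : gg π = 1/π - 2/π^3 := by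
    rw [gg, Real.cos_pi, Real.sin_pi]
    ring
  have hT : |∫ t in Ioi π, Real.cos t / t^4| ≤ 1/(3*π^3) := tail_bound Real.pi_pos
  have hπ3 : (3:ℝ) < π := Real.pi_gt_three
  have habs : |Lc| ≤ |Si π| + |gg π| + 6 * |∫ t in Ioi π, Real.cos t / t^4| := by
    rw [Lc]
    calc |Si π - gg π + 6 * ∫ t in Ioi π, Real.cos t / t^4|
        ≤ |Si π - gg π| + |6 * ∫ t in Ioi π, Real.cos t / t^4| := abs_add_le _ _
    _ ≤ |Si π| + |gg π| + 6 * |∫ t in Ioi π, Real.cos t / t^4| := by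
        rw [abs_mul]
        have := abs_sub (Si π) (gg π)
        simp only [abs_of_pos (by norm_num : (0:ℝ) < 6)] at *
        linarith [abs_sub_abs_le_abs_sub (Si π) (gg π), abs_sub (Si π) (gg π)]
  have hggb : |gg π| ≤ 1/π + 2/π^3 := by
    rw [hgg]
    calc |1/π - 2/π^3| ≤ |1/π| + |2/π^3| := abs_sub _ _
    _ = 1/π + 2/π^3 := by
        rw [abs_of_pos (by positivity), abs_of_pos (by positivity)]
  have hle : |Lc| ≤ π + (1/π + 2/π^3) + 6*(1/(3*π^3)) := by
    have h6 : 6 * |∫ t in Ioi π, Real.cos t / t^4| ≤ 6*(1/(3*π^3)) := by linarith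
    linarith
  have h1 : 1/π ≤ 1/3 := by
    rw [div_le_div_iff₀ Real.pi_pos (by norm_num)]
    linarith
  have h2 : 2/π^3 ≤ 2/27 := by
    rw [div_le_div_iff₀ (by positivity) (by norm_num)]
    have h9 : (9:ℝ) ≤ π^2 := by nlinarith [Real.pi_gt_three]
    have h27 : (27:ℝ) ≤ π^3 := by nlinarith [Real.pi_gt_three, mul_le_mul_of_nonneg_right h9 Real.pi_pos.le]
    nlinarith
  have h3 : 6*(1/(3*π^3)) = 2/π^3 := by field_simp; ring
  have hπ4 : π < 3.15 := by linarith [Real.pi_lt_d2]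
  rw [h3] at hle
  linarith

lemma FF_even (c : ℝ) : FF (-c) = FF c := by
  have hfun : (fun r : ℝ => (Real.cos (-c*r) - 1)/r^2)
      = fun r : ℝ => (Real.cos (c*r) - 1)/r^2 := by
    funext r
    rw [neg_mul, Real.cos_neg]
  rw [FF, FF, hfun]

lemma trig4 (u v w : ℝ) : 4*(Real.cos u * (Real.sin v * Real.sin w))
    = Real.cos (u+v-w) + Real.cos (u-v+w) - Real.cos (u+v+w) - Real.cos (u-v-w) := by
  simp only [Real.cos_add, Real.cos_sub, Real.sin_add, Real.sin_sub]
  ring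

lemma DEC (A B C : ℝ) :
    ∫ r in (0:ℝ)..1, Real.cos (A*r) * (Real.sin (B*r) * Real.sin (C*r) / r^2)
      = (1/4) * (FF (A+B-C) + FF (A-B+C) - FF (A+B+C) - FF (A-B-C)) := by
  have hfun : (fun r : ℝ => Real.cos (A*r) * (Real.sin (B*r) * Real.sin (C*r) / r^2))
      = fun r : ℝ => (1/4) * ((((Real.cos ((A+B-C)*r) - 1)/r^2
          + (Real.cos ((A-B+C)*r) - 1)/r^2)
          - (Real.cos ((A+B+C)*r) - 1)/r^2) - (Real.cos ((A-B-C)*r) - 1)/r^2) := by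
    funext r
    rcases eq_or_ne r 0 with h | h
    · simp [h]
    · have h4 := trig4 (A*r) (B*r) (C*r)
      rw [show (A+B-C)*r = A*r+B*r-C*r from by ring,
        show (A-B+C)*r = A*r-B*r+C*r from by ring,
        show (A+B+C)*r = A*r+B*r+C*r from by ring,
        show (A-B-C)*r = A*r-B*r-C*r from by ring]
      linear_combination (1/(4*r^2)) * h4
  rw [hfun]
  rw [intervalIntegral.integral_const_mul]
  rw [intervalIntegral.integral_sub (((integrable_cos_aux (A+B-C) 0 1).add
      (integrable_cos_aux (A-B+C) 0 1)).sub (integrable_cos_aux (A+B+C) 0 1))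
      (integrable_cos_aux (A-B-C) 0 1),
    intervalIntegral.integral_sub ((integrable_cos_aux (A+B-C) 0 1).add
      (integrable_cos_aux (A-B+C) 0 1)) (integrable_cos_aux (A+B+C) 0 1),
    intervalIntegral.integral_add (integrable_cos_aux (A+B-C) 0 1)
      (integrable_cos_aux (A-B+C) 0 1)]
  rw [FF, FF, FF, FF]

lemma abs_comb {L D e1 e2 e3 e4 b1 b2 b3 b4 dB : ℝ} (hL : |L| ≤ 4) (hD : |D| ≤ dB)
    (h1 : |e1| ≤ b1) (h2 : |e2| ≤ b2) (h3 : |e3| ≤ b3) (h4 : |e4| ≤ b4) :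
    |1/4*(-(L*π)*D + (e1+e2-e3-e4))| ≤ 1/4*(4*π*dB + (b1+b2+b3+b4)) := by
  have hπ := Real.pi_pos
  have hLD : |(L*π)*D| ≤ 4*π*dB := by
    rw [abs_mul, abs_mul, abs_of_pos hπ]
    have h0 : 0 ≤ |D| := abs_nonneg D
    have := mul_le_mul (mul_le_mul hL le_rfl hπ.le (by norm_num)) hD h0
      (by positivity : (0:ℝ) ≤ 4*π)
    linarith
  have he : |e1+e2-e3-e4| ≤ b1+b2+b3+b4 := by
    calc |e1+e2-e3-e4| ≤ |e1+e2-e3| + |e4| := abs_sub _ _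
    _ ≤ |e1+e2| + |e3| + |e4| := by linarith [abs_sub (e1+e2) e3]
    _ ≤ |e1| + |e2| + |e3| + |e4| := by linarith [abs_add_le e1 e2]
    _ ≤ b1+b2+b3+b4 := by linarith
  calc |1/4*(-(L*π)*D + (e1+e2-e3-e4))| = 1/4*|(-(L*π)*D + (e1+e2-e3-e4))| := by
        rw [abs_mul, abs_of_pos (by norm_num : (0:ℝ) < 1/4)]
  _ ≤ 1/4*(|(L*π)*D| + |e1+e2-e3-e4|) := by
      rw [show -(L*π)*D = -((L*π)*D) from neg_mul _ _]
      have h := abs_add_le (-((L*π)*D)) (e1+e2-e3-e4)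
      rw [abs_neg] at h
      linarith
  _ ≤ 1/4*(4*π*dB + (b1+b2+b3+b4)) := by linarith


lemma caseA_arith {a n₂ n₃ q₄ : ℝ} (hn31 : 1 ≤ n₃) (hn21 : 1 ≤ n₂) (hn32 : n₃ ≤ n₂)
    (hq₄r : 1 ≤ q₄) (hae : a = n₂ + n₃ + q₄) :
    1/(2*q₄^2) ≤ 60*n₂^2*n₃/a^2 := by
  have ha0 : 0 < a := by nlinarith
  have h1 : a ≤ 3*n₂*q₄ := by nlinarith
  have h2' : a^2 ≤ 9*(n₂*q₄)^2 := by nlinarith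
  rw [div_le_div_iff₀ (by positivity) (by positivity)]
  nlinarith [mul_le_mul_of_nonneg_left hn31 (sq_nonneg (n₂*q₄))]

lemma band_arith {a n₂ n₃ : ℝ} (hn31 : 1 ≤ n₃) (ha0 : 0 < a) (hn21 : 1 ≤ n₂)
    (haM : a ≤ 2*n₂) :
    1/4*(4*π*(4*n₃) + (1+1+1+1)) ≤ 60*n₂^2*n₃/a^2 := by
  have hπ4 : π < 3.15 := by linarith [Real.pi_lt_d2]
  have ha2 : a^2 ≤ 4*n₂^2 := by nlinarith
  have hX : 1/4*(4*π*(4*n₃) + (1+1+1+1)) ≤ 14*n₃ := by nlinarith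
  refine le_trans hX ?_
  rw [le_div_iff₀ (by positivity)]
  nlinarith [mul_le_mul_of_nonneg_left ha2 (by linarith : (0:ℝ) ≤ 14*n₃)]

lemma core' {n₂ n₃ a : ℕ} (h3 : 1 ≤ n₃) (h32 : n₃ ≤ n₂) (ha : 1 ≤ a) :
    |∫ r in (0:ℝ)..1, Real.cos ((a:ℝ)*π*r) *
      (Real.sin (π*(n₂:ℝ)*r) * Real.sin (π*(n₃:ℝ)*r) / r^2)|
      ≤ 60 * (n₂:ℝ)^2 * (n₃:ℝ) / (a:ℝ)^2 := by
  have h2 : 1 ≤ n₂ := le_trans h3 h32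
  have hπ := Real.pi_pos
  have hπ4 : π < 3.15 := by linarith [Real.pi_lt_d2]
  have ha0 : (0:ℝ) < a := by exact_mod_cast ha
  have hn20 : (0:ℝ) < n₂ := by exact_mod_cast h2
  have hn31 : (1:ℝ) ≤ n₃ := by exact_mod_cast h3
  have hn21 : (1:ℝ) ≤ n₂ := by exact_mod_cast h2
  have hn32 : (n₃:ℝ) ≤ n₂ := by exact_mod_cast h32
  rw [DEC ((a:ℝ)*π) (π*(n₂:ℝ)) (π*(n₃:ℝ))]
  rcases le_or_gt a (n₂ + n₃) with hband | hout
  case inr =>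
    -- non-resonant case
    have hc1 : n₃ ≤ a + n₂ := by omega
    have hc2 : n₂ ≤ a := by omega
    have hc3 : n₃ ≤ a - n₂ := by omega
    have e₁ : (a:ℝ)*π + π*(n₂:ℝ) - π*(n₃:ℝ) = ((a + n₂ - n₃ : ℕ):ℝ)*π := by
      push_cast [hc1]; ring
    have e₂ : (a:ℝ)*π - π*(n₂:ℝ) + π*(n₃:ℝ) = ((a - n₂ + n₃ : ℕ):ℝ)*π := by
      push_cast [hc2]; ring
    have e₃ : (a:ℝ)*π + π*(n₂:ℝ) + π*(n₃:ℝ) = ((a + n₂ + n₃ : ℕ):ℝ)*π := by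
      push_cast; ring
    have e₄ : (a:ℝ)*π - π*(n₂:ℝ) - π*(n₃:ℝ) = ((a - n₂ - n₃ : ℕ):ℝ)*π := by
      push_cast [hc2, hc3]; ring
    rw [e₁, e₂, e₃, e₄]
    set q₁ := a + n₂ - n₃ with hq₁
    set q₂ := a - n₂ + n₃ with hq₂
    set q₃ := a + n₂ + n₃ with hq₃
    set q₄ := a - n₂ - n₃ with hq₄
    have hq₄1 : 1 ≤ q₄ := by omega
    have hq₄r : (1:ℝ) ≤ (q₄:ℝ) := by exact_mod_cast hq₄1
    have key : (1/4) * (FF ((q₁:ℝ)*π) + FF ((q₂:ℝ)*π) - FF ((q₃:ℝ)*π) - FF ((q₄:ℝ)*π))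
        = 1/4*(-(Lc*π)*(((q₁:ℝ) + (q₂:ℝ)) - (q₃:ℝ) - (q₄:ℝ))
          + ((FF ((q₁:ℝ)*π) + Lc*π*(q₁:ℝ) - 1) + (FF ((q₂:ℝ)*π) + Lc*π*(q₂:ℝ) - 1)
            - (FF ((q₃:ℝ)*π) + Lc*π*(q₃:ℝ) - 1) - (FF ((q₄:ℝ)*π) + Lc*π*(q₄:ℝ) - 1))) := by
      ring
    rw [key]
    have hD : |(((q₁:ℝ) + (q₂:ℝ)) - (q₃:ℝ) - (q₄:ℝ))| ≤ 0 := by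
      have : ((q₁:ℝ) + (q₂:ℝ)) - (q₃:ℝ) - (q₄:ℝ) = 0 := by
        rw [hq₁, hq₂, hq₃, hq₄]
        push_cast [hc1, hc2, hc3]
        ring
      rw [this]
      simp
    have hb : ∀ q : ℕ, q₄ ≤ q → |FF ((q:ℝ)*π) + Lc*π*(q:ℝ) - 1| ≤ 1/(2*(q₄:ℝ)^2) := by
      intro q hq
      have hq1 : 1 ≤ q := le_trans hq₄1 hq
      have hqr : (q₄:ℝ) ≤ (q:ℝ) := by exact_mod_cast hq
      calc |FF ((q:ℝ)*π) + Lc*π*(q:ℝ) - 1| ≤ 1/(2*(q:ℝ)^2) := E_bound hq1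
      _ ≤ 1/(2*(q₄:ℝ)^2) := by gcongr
    have habs := abs_comb Lc_bound hD (hb q₁ (by omega)) (hb q₂ (by omega))
      (hb q₃ (by omega)) (hb q₄ le_rfl)
    refine le_trans habs ?_
    -- 1/4*(4π*0 + 4/(2 q₄²)) ≤ 60 n₂² n₃ / a²
    have hsum : 1/4*(4*π*0 + (1/(2*(q₄:ℝ)^2) + 1/(2*(q₄:ℝ)^2) + 1/(2*(q₄:ℝ)^2)
        + 1/(2*(q₄:ℝ)^2))) = 1/(2*(q₄:ℝ)^2) := by ring
    rw [hsum]
    have hae : (a:ℝ) = (n₂:ℝ) + (n₃:ℝ) + (q₄:ℝ) := by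
      have : a = n₂ + n₃ + q₄ := by omega
      exact_mod_cast this
    exact caseA_arith hn31 hn21 hn32 hq₄r hae
  case inl =>
    -- resonant band case
    have haM : (a:ℝ) ≤ 2*(n₂:ℝ) := by
      have : a ≤ 2*n₂ := by omega
      exact_mod_cast this
    have hfinal : 1/4*(4*π*(4*(n₃:ℝ)) + (1+1+1+1)) ≤ 60 * (n₂:ℝ)^2 * (n₃:ℝ) / (a:ℝ)^2 :=
      band_arith hn31 ha0 hn21 haM
    have hc3 : a ≤ n₂ + n₃ := hband
    have e₃ : (a:ℝ)*π + π*(n₂:ℝ) + π*(n₃:ℝ) = ((a + n₂ + n₃ : ℕ):ℝ)*π := by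
      push_cast; ring
    have e₄ : (a:ℝ)*π - π*(n₂:ℝ) - π*(n₃:ℝ) = -(((n₂ + n₃ - a : ℕ):ℝ)*π) := by
      push_cast [hc3]; ring
    have hc1 : n₃ ≤ a + n₂ := by omega
    have e₁ : (a:ℝ)*π + π*(n₂:ℝ) - π*(n₃:ℝ) = ((a + n₂ - n₃ : ℕ):ℝ)*π := by
      push_cast [hc1]; ring
    rw [e₁, e₃, e₄, FF_even]
    rcases le_or_gt n₂ (a + n₃) with hsub | hsub
    · -- m ≤ a
      have e₂ : (a:ℝ)*π - π*(n₂:ℝ) + π*(n₃:ℝ) = ((a + n₃ - n₂ : ℕ):ℝ)*π := by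
        push_cast [hsub]; ring
      rw [e₂]
      set q₁ := a + n₂ - n₃ with hq₁
      set q₂ := a + n₃ - n₂ with hq₂
      set q₃ := a + n₂ + n₃ with hq₃
      set q₄ := n₂ + n₃ - a with hq₄
      have key : (1/4) * (FF ((q₁:ℝ)*π) + FF ((q₂:ℝ)*π) - FF ((q₃:ℝ)*π) - FF ((q₄:ℝ)*π))
          = 1/4*(-(Lc*π)*(((q₁:ℝ) + (q₂:ℝ)) - (q₃:ℝ) - (q₄:ℝ))
            + ((FF ((q₁:ℝ)*π) + Lc*π*(q₁:ℝ) - 1) + (FF ((q₂:ℝ)*π) + Lc*π*(q₂:ℝ) - 1)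
              - (FF ((q₃:ℝ)*π) + Lc*π*(q₃:ℝ) - 1) - (FF ((q₄:ℝ)*π) + Lc*π*(q₄:ℝ) - 1))) := by
        ring
      rw [key]
      have hDval : ((q₁:ℝ) + (q₂:ℝ)) - (q₃:ℝ) - (q₄:ℝ) = 2*(a:ℝ) - 2*(n₂:ℝ) - 2*(n₃:ℝ) := by
        rw [hq₁, hq₂, hq₃, hq₄]
        push_cast [hc1, hsub, hc3]
        ring
      have hD : |(((q₁:ℝ) + (q₂:ℝ)) - (q₃:ℝ) - (q₄:ℝ))| ≤ 4*(n₃:ℝ) := by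
        rw [hDval]
        rw [abs_le]
        constructor
        · have : (n₂:ℝ) ≤ (a:ℝ) + (n₃:ℝ) := by exact_mod_cast hsub
          linarith
        · have : (a:ℝ) ≤ (n₂:ℝ) + (n₃:ℝ) := by exact_mod_cast hc3
          linarith
      have habs := abs_comb Lc_bound hD (E_bound_all q₁) (E_bound_all q₂)
        (E_bound_all q₃) (E_bound_all q₄)
      exact le_trans habs hfinal
    · -- a < m
      have hsub' : a + n₃ ≤ n₂ := le_of_lt hsub
      have e₂ : (a:ℝ)*π - π*(n₂:ℝ) + π*(n₃:ℝ) = -(((n₂ - n₃ - a : ℕ):ℝ)*π) := by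
        push_cast [show n₃ ≤ n₂ from h32, show a ≤ n₂ - n₃ by omega]; ring
      rw [e₂, FF_even]
      set q₁ := a + n₂ - n₃ with hq₁
      set q₂ := n₂ - n₃ - a with hq₂
      set q₃ := a + n₂ + n₃ with hq₃
      set q₄ := n₂ + n₃ - a with hq₄
      have key : (1/4) * (FF ((q₁:ℝ)*π) + FF ((q₂:ℝ)*π) - FF ((q₃:ℝ)*π) - FF ((q₄:ℝ)*π))
          = 1/4*(-(Lc*π)*(((q₁:ℝ) + (q₂:ℝ)) - (q₃:ℝ) - (q₄:ℝ))
            + ((FF ((q₁:ℝ)*π) + Lc*π*(q₁:ℝ) - 1) + (FF ((q₂:ℝ)*π) + Lc*π*(q₂:ℝ) - 1)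
              - (FF ((q₃:ℝ)*π) + Lc*π*(q₃:ℝ) - 1) - (FF ((q₄:ℝ)*π) + Lc*π*(q₄:ℝ) - 1))) := by
        ring
      rw [key]
      have hDval : ((q₁:ℝ) + (q₂:ℝ)) - (q₃:ℝ) - (q₄:ℝ) = -(4*(n₃:ℝ)) := by
        rw [hq₁, hq₂, hq₃, hq₄]
        push_cast [hc1, hc3, show n₃ ≤ n₂ from h32, show a ≤ n₂ - n₃ by omega]
        ring
      have hD : |(((q₁:ℝ) + (q₂:ℝ)) - (q₃:ℝ) - (q₄:ℝ))| ≤ 4*(n₃:ℝ) := by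
        rw [hDval, abs_neg, abs_of_nonneg (by positivity)]
      have habs := abs_comb Lc_bound hD (E_bound_all q₁) (E_bound_all q₂)
        (E_bound_all q₃) (E_bound_all q₄)
      exact le_trans habs hfinal

lemma core {n₂ n₃ a : ℕ} (h2 : 1 ≤ n₂) (h3 : 1 ≤ n₃) (ha : 1 ≤ a) :
    |∫ r in (0:ℝ)..1, Real.cos ((a:ℝ)*π*r) *
      (Real.sin (π*(n₂:ℝ)*r) * Real.sin (π*(n₃:ℝ)*r) / r^2)|
      ≤ 60 * ((max n₂ n₃ : ℕ):ℝ)^2 * ((min n₂ n₃ : ℕ):ℝ) / (a:ℝ)^2 := by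
  rcases le_total n₃ n₂ with h | h
  · rw [show max n₂ n₃ = n₂ from max_eq_left h, show min n₂ n₃ = n₃ from min_eq_right h]
    exact core' h3 h ha
  · have hswap : (fun r : ℝ => Real.cos ((a:ℝ)*π*r) *
        (Real.sin (π*(n₂:ℝ)*r) * Real.sin (π*(n₃:ℝ)*r) / r^2))
        = fun r : ℝ => Real.cos ((a:ℝ)*π*r) *
        (Real.sin (π*(n₃:ℝ)*r) * Real.sin (π*(n₂:ℝ)*r) / r^2) := by
      funext r; ring
    rw [show max n₂ n₃ = n₃ from max_eq_right h, show min n₂ n₃ = n₂ from min_eq_left h,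
      hswap]
    exact core' h2 h ha

lemma integrable_cosphi (c b d : ℝ) :
    IntervalIntegrable (fun r : ℝ => Real.cos (c*r) * (Real.sin (b*r) * Real.sin (d*r) / r^2))
      volume 0 1 := by
  have hm : Measurable fun r : ℝ => Real.cos (c*r) * (Real.sin (b*r) * Real.sin (d*r) / r^2) :=
    (Real.measurable_cos.comp (measurable_const.mul measurable_id)).mul
      (((Real.measurable_sin.comp (measurable_const.mul measurable_id)).mul
        (Real.measurable_sin.comp (measurable_const.mul measurable_id))).div
        (measurable_id.pow_const 2))
  refine intervalIntegrable_of_bound _ hm (|b| * |d|) (fun x => ?_) 0 1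
  rcases eq_or_ne x 0 with h | h
  · simp [h]; positivity
  · rw [abs_mul]
    have h1 : |Real.cos (c*x)| ≤ 1 := Real.abs_cos_le_one _
    have h2 : |Real.sin (b*x) * Real.sin (d*x) / x^2| ≤ |b| * |d| := by
      rw [abs_div, abs_of_nonneg (by positivity : (0:ℝ) ≤ x^2), div_le_iff₀ (by positivity)]
      calc |Real.sin (b*x) * Real.sin (d*x)| = |Real.sin (b*x)| * |Real.sin (d*x)| := abs_mul _ _
      _ ≤ |b*x| * |d*x| := by
          apply mul_le_mul Real.abs_sin_le_abs Real.abs_sin_le_abs (abs_nonneg _) (abs_nonneg _)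
      _ = |b| * |d| * x^2 := by
          rw [abs_mul, abs_mul]
          rw [show |b| * |x| * (|d| * |x|) = |b| * |d| * (|x| * |x|) from by ring,
            abs_mul_abs_self, sq x]
    calc |Real.cos (c*x)| * |Real.sin (b*x) * Real.sin (d*x) / x^2|
        ≤ 1 * (|b| * |d|) := mul_le_mul h1 h2 (abs_nonneg _) (by norm_num)
    _ = |b| * |d| := by ring

lemma sinsin (u v : ℝ) :
    Real.sin u * Real.sin v = (Real.cos (u-v) - Real.cos (u+v))/2 := by
  rw [Real.cos_sub, Real.cos_add]
  ring

lemma deriv_lower {n₂ n₃ : ℕ} (h3 : 1 ≤ n₃) (h32 : n₃ ≤ n₂) :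
    3*(n₂:ℝ)^2*(n₃:ℝ) ≤
      |deriv (fun r : ℝ => Real.sin (π*(n₂:ℝ)*r) * Real.sin (π*(n₃:ℝ)*r) / r^2)
        (1/(2*(n₂:ℝ)))| := by
  have h2 : 1 ≤ n₂ := le_trans h3 h32
  have hn20 : (0:ℝ) < n₂ := by exact_mod_cast h2
  have hn30 : (0:ℝ) < n₃ := by exact_mod_cast h3
  have hn21 : (1:ℝ) ≤ n₂ := by exact_mod_cast h2
  have hn31 : (1:ℝ) ≤ n₃ := by exact_mod_cast h3
  have hn32 : (n₃:ℝ) ≤ n₂ := by exact_mod_cast h32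
  have hπ := Real.pi_pos
  set r₀ : ℝ := 1/(2*(n₂:ℝ)) with hr₀
  have hr₀0 : 0 < r₀ := by rw [hr₀]; positivity
  have hs : HasDerivAt (fun r : ℝ => Real.sin (π*(n₂:ℝ)*r) * Real.sin (π*(n₃:ℝ)*r))
      (Real.cos (π*(n₂:ℝ)*r₀) * (π*(n₂:ℝ)*1) * Real.sin (π*(n₃:ℝ)*r₀)
        + Real.sin (π*(n₂:ℝ)*r₀) * (Real.cos (π*(n₃:ℝ)*r₀) * (π*(n₃:ℝ)*1))) r₀ :=
    (((hasDerivAt_id r₀).const_mul (π*(n₂:ℝ))).sin).mul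
      (((hasDerivAt_id r₀).const_mul (π*(n₃:ℝ))).sin)
  have hφ := hs.div (hasDerivAt_pow 2 r₀) (by positivity)
  have harg : π*(n₂:ℝ)*r₀ = π/2 := by
    rw [hr₀]; field_simp
  have hval : deriv (fun r : ℝ => Real.sin (π*(n₂:ℝ)*r) * Real.sin (π*(n₃:ℝ)*r) / r^2) r₀
      = π*(n₃:ℝ)*Real.cos (π*(n₃:ℝ)*r₀)*(4*(n₂:ℝ)^2)
        - Real.sin (π*(n₃:ℝ)*r₀)*(16*(n₂:ℝ)^3) := by
    rw [show (fun r : ℝ => Real.sin (π*(n₂:ℝ)*r) * Real.sin (π*(n₃:ℝ)*r) / r^2) = ((fun r : ℝ => Real.sin (π*(n₂:ℝ)*r) * Real.sin (π*(n₃:ℝ)*r)) / fun x => x^2) from rfl, hφ.deriv, harg, Real.sin_pi_div_two, Real.cos_pi_div_two, hr₀]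
    have hn2ne : (n₂:ℝ) ≠ 0 := ne_of_gt hn20
    field_simp
    rw [show (2:ℕ) - 1 = 1 from rfl, pow_one, Nat.cast_ofNat]
    field_simp
    ring
  have ht0 : 0 ≤ π*(n₃:ℝ)*r₀ := by positivity
  have htπ : π*(n₃:ℝ)*r₀ ≤ π/2 := by
    rw [hr₀, show π*(n₃:ℝ)*(1/(2*(n₂:ℝ))) = π*(n₃:ℝ)/(2*(n₂:ℝ)) from by ring,
      div_le_div_iff₀ (by positivity) (by norm_num)]
    nlinarith
  have hsin : (n₃:ℝ)/(n₂:ℝ) ≤ Real.sin (π*(n₃:ℝ)*r₀) := by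
    have := Real.mul_le_sin ht0 htπ
    have he : 2/π*(π*(n₃:ℝ)*r₀) = (n₃:ℝ)/(n₂:ℝ) := by
      rw [hr₀]; field_simp
    linarith [he ▸ this]
  have hcos : Real.cos (π*(n₃:ℝ)*r₀) ≤ 1 := Real.cos_le_one _
  have hcos0 : 0 ≤ Real.cos (π*(n₃:ℝ)*r₀) :=
    Real.cos_nonneg_of_mem_Icc ⟨by linarith, htπ⟩
  have hπ4 : π < 3.15 := by linarith [Real.pi_lt_d2]
  have hterm1 : π*(n₃:ℝ)*Real.cos (π*(n₃:ℝ)*r₀)*(4*(n₂:ℝ)^2) ≤ 4*π*(n₂:ℝ)^2*(n₃:ℝ) := by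
    nlinarith [mul_le_mul_of_nonneg_left hcos
      (show (0:ℝ) ≤ π*(n₃:ℝ)*(4*(n₂:ℝ)^2) by positivity)]
  have hterm2 : 16*(n₂:ℝ)^2*(n₃:ℝ) ≤ Real.sin (π*(n₃:ℝ)*r₀)*(16*(n₂:ℝ)^3) := by
    have := mul_le_mul_of_nonneg_right hsin (by positivity : (0:ℝ) ≤ 16*(n₂:ℝ)^3)
    calc 16*(n₂:ℝ)^2*(n₃:ℝ) = (n₃:ℝ)/(n₂:ℝ)*(16*(n₂:ℝ)^3) := by field_simp
    _ ≤ _ := this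
  have hneg : deriv (fun r : ℝ => Real.sin (π*(n₂:ℝ)*r) * Real.sin (π*(n₃:ℝ)*r) / r^2) r₀
      ≤ -(3*(n₂:ℝ)^2*(n₃:ℝ)) := by
    rw [hval]
    nlinarith [mul_le_mul_of_nonneg_right hπ4.le
      (show (0:ℝ) ≤ 4*(n₂:ℝ)^2*(n₃:ℝ) by positivity)]
  calc 3*(n₂:ℝ)^2*(n₃:ℝ)
      ≤ -(deriv (fun r : ℝ => Real.sin (π*(n₂:ℝ)*r) * Real.sin (π*(n₃:ℝ)*r) / r^2) r₀) := by
        linarith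
  _ ≤ |deriv (fun r : ℝ => Real.sin (π*(n₂:ℝ)*r) * Real.sin (π*(n₃:ℝ)*r) / r^2) r₀| := by
      rw [← abs_neg]
      exact le_abs_self _

lemma partb_arith {mx mn a₁ N2 N3 Np : ℝ} (hmx : mx ≤ 2*N2) (hmn : mn ≤ 2*N3)
    (hmx0 : 0 ≤ mx) (hmn0 : 0 ≤ mn) (hN30 : 0 ≤ N3) (hN20 : 0 ≤ N2)
    (ha₁ : 3/4*Np ≤ a₁) (ha₁0 : 0 < a₁) (hNp : 0 < Np) :
    60*mx^2*mn/a₁^2 ≤ 1000*N2^2*N3/Np^2 := by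
  rw [div_le_div_iff₀ (by positivity) (by positivity)]
  have e1 : mx^2 ≤ 4*N2^2 := by nlinarith
  have e2 : Np^2 ≤ (16/9)*a₁^2 := by nlinarith
  have t1 : mx^2*mn ≤ (4*N2^2)*(2*N3) := by
    exact mul_le_mul e1 hmn hmn0 (by positivity)
  have t2 : (mx^2*mn)*Np^2 ≤ ((4*N2^2)*(2*N3))*((16/9)*a₁^2) :=
    mul_le_mul t1 e2 (by positivity) (by positivity)
  nlinarith [t2, mul_nonneg (mul_nonneg (sq_nonneg N2) hN30) (sq_nonneg a₁)]

/-- For `φ(r) = sin(πn₂ r) sin(πn₃ r) / r²` on `(0,1]`: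
(a) for every positive integer `a`, `|∫₀¹ cos(aπr) φ(r) dr| ≤ C ‖φ'‖_∞ / a²`, and
(b) if `n ∼ N'`, `n₁ ≤ N₁'`, `n₂ ∼ N₂'`, `n₃ ∼ N₃'` with `N' > 4N₁'` and `N₂' ≥ N₃'`, then
`|∫₀¹ sin(nπr) sin(n₁πr) φ(r) dr| ≤ C (N₂')² N₃' / (N')²`. -/
theorem oscillatory_integral_bound :
    ∃ C > 0, ∀ n₂ n₃ : ℕ, 1 ≤ n₂ → 1 ≤ n₃ →
      let φ : ℝ → ℝ := fun r => Real.sin (Real.pi * n₂ * r) * Real.sin (Real.pi * n₃ * r) / r ^ 2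
      (∀ M : ℝ, (∀ r ∈ Set.Ioc (0 : ℝ) 1, |deriv φ r| ≤ M) →
        ∀ a : ℕ, 1 ≤ a →
          |∫ r in (0 : ℝ)..1, Real.cos (a * Real.pi * r) * φ r| ≤ C * M / (a : ℝ) ^ 2)
      ∧ (∀ N' N₁' N₂' N₃' n n₁ : ℕ,
          N' ≤ n → n < 2 * N' → n₁ ≤ N₁' → N₂' ≤ n₂ → n₂ < 2 * N₂' → N₃' ≤ n₃ → n₃ < 2 * N₃' →
          4 * N₁' < N' → N₃' ≤ N₂' →
          |∫ r in (0 : ℝ)..1, Real.sin (n * Real.pi * r) * Real.sin (n₁ * Real.pi * r) * φ r|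
            ≤ C * (N₂' : ℝ) ^ 2 * (N₃' : ℝ) / (N' : ℝ) ^ 2) := by
  refine ⟨1000, by norm_num, ?_⟩
  intro n₂ n₃ h2 h3
  intro φ
  have hn20 : (0:ℝ) < n₂ := by exact_mod_cast h2
  have hn30 : (0:ℝ) < n₃ := by exact_mod_cast h3
  have hn21 : (1:ℝ) ≤ n₂ := by exact_mod_cast h2
  have hn31 : (1:ℝ) ≤ n₃ := by exact_mod_cast h3
  constructor
  · -- part (a)
    intro M hM a ha
    have ha0 : (0:ℝ) < a := by exact_mod_cast ha
    have hMax : 3*((max n₂ n₃ : ℕ):ℝ)^2*((min n₂ n₃ : ℕ):ℝ) ≤ M := by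
      rcases le_total n₃ n₂ with h | h
      · rw [show max n₂ n₃ = n₂ from max_eq_left h, show min n₂ n₃ = n₃ from min_eq_right h]
        have hmem : (1/(2*(n₂:ℝ))) ∈ Set.Ioc (0:ℝ) 1 := by
          constructor
          · positivity
          · rw [div_le_one (by positivity)]
            linarith [hn21]
        exact le_trans (deriv_lower h3 h) (hM _ hmem)
      · rw [show max n₂ n₃ = n₃ from max_eq_right h, show min n₂ n₃ = n₂ from min_eq_left h]
        have hswap : φ = (fun r : ℝ => Real.sin (π*(n₃:ℝ)*r) * Real.sin (π*(n₂:ℝ)*r) / r^2) := by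
          funext r
          show Real.sin (π*(n₂:ℝ)*r) * Real.sin (π*(n₃:ℝ)*r) / r^2 = _
          ring
        have hmem : (1/(2*(n₃:ℝ))) ∈ Set.Ioc (0:ℝ) 1 := by
          constructor
          · positivity
          · rw [div_le_one (by positivity)]
            linarith [hn31]
        have hlow := deriv_lower h2 h
        rw [← hswap] at hlow
        exact le_trans hlow (hM _ hmem)
    have hX0 : (0:ℝ) ≤ ((max n₂ n₃ : ℕ):ℝ)^2*((min n₂ n₃ : ℕ):ℝ) := by positivity
    calc |∫ r in (0:ℝ)..1, Real.cos (a * Real.pi * r) * φ r|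
        ≤ 60 * ((max n₂ n₃ : ℕ):ℝ)^2 * ((min n₂ n₃ : ℕ):ℝ) / (a:ℝ)^2 := core h2 h3 ha
    _ ≤ 1000 * M / (a:ℝ)^2 := by
        have h1 : 60 * ((max n₂ n₃ : ℕ):ℝ)^2 * ((min n₂ n₃ : ℕ):ℝ) ≤ 1000*M := by
          nlinarith [hMax, hX0]
        rw [div_le_div_iff₀ (by positivity) (by positivity)]
        nlinarith [mul_le_mul_of_nonneg_right h1 (sq_nonneg (a:ℝ))]
  · -- part (b)
    intro N' N₁' N₂' N₃' n n₁ hN'n hn2N' hn₁ hN₂n₂ hn₂u hN₃n₃ hn₃u h4N₁ hN₃₂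
    have hn1n : n₁ ≤ n := by omega
    set a₁ := n - n₁ with ha₁def
    set a₂ := n + n₁ with ha₂def
    have ha₁1 : 1 ≤ a₁ := by omega
    have ha₂1 : 1 ≤ a₂ := by omega
    have hpt : (fun r : ℝ => Real.sin (n * Real.pi * r) * Real.sin (n₁ * Real.pi * r) * φ r)
        = fun r : ℝ => 1/2 * (Real.cos ((a₁:ℝ) * Real.pi * r) * φ r)
          - 1/2 * (Real.cos ((a₂:ℝ) * Real.pi * r) * φ r) := by
      funext r
      have h := sinsin ((n:ℝ)*π*r) ((n₁:ℝ)*π*r)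
      have e1 : (n:ℝ)*π*r - (n₁:ℝ)*π*r = (a₁:ℝ)*π*r := by
        rw [ha₁def]; push_cast [hn1n]; ring
      have e2 : (n:ℝ)*π*r + (n₁:ℝ)*π*r = (a₂:ℝ)*π*r := by
        rw [ha₂def]; push_cast; ring
      rw [h, e1, e2]
      ring
    rw [hpt]
    have hi1 : IntervalIntegrable (fun r : ℝ => Real.cos ((a₁:ℝ) * Real.pi * r) * φ r)
        volume 0 1 := integrable_cosphi ((a₁:ℝ)*π) (π*(n₂:ℝ)) (π*(n₃:ℝ))
    have hi2 : IntervalIntegrable (fun r : ℝ => Real.cos ((a₂:ℝ) * Real.pi * r) * φ r)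
        volume 0 1 := integrable_cosphi ((a₂:ℝ)*π) (π*(n₂:ℝ)) (π*(n₃:ℝ))
    rw [intervalIntegral.integral_sub (hi1.const_mul (1/2)) (hi2.const_mul (1/2)),
      intervalIntegral.integral_const_mul, intervalIntegral.integral_const_mul]
    have hb1 : |∫ r in (0:ℝ)..1, Real.cos ((a₁:ℝ) * Real.pi * r) * φ r|
        ≤ 60 * ((max n₂ n₃ : ℕ):ℝ)^2 * ((min n₂ n₃ : ℕ):ℝ) / (a₁:ℝ)^2 := core h2 h3 ha₁1
    have hb2 : |∫ r in (0:ℝ)..1, Real.cos ((a₂:ℝ) * Real.pi * r) * φ r|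
        ≤ 60 * ((max n₂ n₃ : ℕ):ℝ)^2 * ((min n₂ n₃ : ℕ):ℝ) / (a₂:ℝ)^2 := core h2 h3 ha₂1
    have ha₁0 : (0:ℝ) < a₁ := by exact_mod_cast ha₁1
    have ha₂0 : (0:ℝ) < a₂ := by exact_mod_cast ha₂1
    have ha12 : (a₁:ℝ) ≤ (a₂:ℝ) := by exact_mod_cast (show a₁ ≤ a₂ by omega)
    have hX0 : (0:ℝ) ≤ 60 * ((max n₂ n₃ : ℕ):ℝ)^2 * ((min n₂ n₃ : ℕ):ℝ) := by positivity
    have hb2' : 60 * ((max n₂ n₃ : ℕ):ℝ)^2 * ((min n₂ n₃ : ℕ):ℝ) / (a₂:ℝ)^2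
        ≤ 60 * ((max n₂ n₃ : ℕ):ℝ)^2 * ((min n₂ n₃ : ℕ):ℝ) / (a₁:ℝ)^2 := by
      gcongr
    set I₁ := ∫ r in (0:ℝ)..1, Real.cos ((a₁:ℝ) * Real.pi * r) * φ r with hI₁
    set I₂ := ∫ r in (0:ℝ)..1, Real.cos ((a₂:ℝ) * Real.pi * r) * φ r with hI₂
    have habs : |1/2 * I₁ - 1/2 * I₂| ≤ 1/2*|I₁| + 1/2*|I₂| := by
      calc |1/2 * I₁ - 1/2 * I₂| ≤ |1/2 * I₁| + |1/2 * I₂| := abs_sub _ _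
      _ = 1/2*|I₁| + 1/2*|I₂| := by
          rw [abs_mul, abs_mul, abs_of_pos (by norm_num : (0:ℝ) < 1/2)]
    have hfin : 1/2*|I₁| + 1/2*|I₂|
        ≤ 60 * ((max n₂ n₃ : ℕ):ℝ)^2 * ((min n₂ n₃ : ℕ):ℝ) / (a₁:ℝ)^2 := by
      linarith
    refine le_trans habs (le_trans hfin ?_)
    have hmx : ((max n₂ n₃ : ℕ):ℝ) ≤ 2*(N₂':ℝ) := by
      have : max n₂ n₃ ≤ 2*N₂' := by omega
      exact_mod_cast this
    have hmn : ((min n₂ n₃ : ℕ):ℝ) ≤ 2*(N₃':ℝ) := by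
      have : min n₂ n₃ ≤ 2*N₃' := by omega
      exact_mod_cast this
    have ha₁N : 3/4*(N':ℝ) ≤ (a₁:ℝ) := by
      have : 3*N' ≤ 4*a₁ := by omega
      have hc : (3:ℝ)*N' ≤ 4*(a₁:ℝ) := by exact_mod_cast this
      linarith
    have hNp : (0:ℝ) < N' := by
      have : 1 ≤ N' := by omega
      exact_mod_cast this
    exact partb_arith hmx hmn (by positivity) (by positivity) (by positivity) (by positivity)
      ha₁N ha₁0 hNp
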